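/- Let V be a real inner product space, A : V → V a symmetric linear map (⟪A v, w⟫ = ⟪v, A w⟫) with ⟪A v, v⟫ ≥ 0 for all v, w ∈ V, k > 0, and suppose Uⁿ⁻¹, Uⁿ, fⁿ ∈ V satisfy (Uⁿ − Uⁿ⁻¹)/k + (1 + ⟪A Uⁿ, Uⁿ⟫) · A Uⁿ = fⁿ. Then (⟪A Uⁿ, Uⁿ⟫ − ⟪A Uⁿ⁻¹, Uⁿ⁻¹⟫)/k + (1 + ⟪A Uⁿ, Uⁿ⟫) ‖A Uⁿ‖² ≤ ‖fⁿ‖². -/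

import Mathlib

/-- Remark 4.1, estimate (4.6): energy estimate for one step of the backward Euler
scheme tested against `A Uⁿ`. -/
theorem backward_euler_gradient_estimate
    {V : Type*} [NormedAddCommGroup V] [InnerProductSpace ℝ V]
    (A : V →ₗ[ℝ] V)
    (hsymm : ∀ v w : V, (inner ℝ (A v) w : ℝ) = inner ℝ v (A w))
    (hpos : ∀ v : V, (0 : ℝ) ≤ inner ℝ (A v) v)
    (k : ℝ) (hk : 0 < k)
    (Uprev Un fn : V)
    (hscheme : (1 / k) • (Un - Uprev) + (1 + (inner ℝ (A Un) Un : ℝ)) • A Un = fn) :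
    ((inner ℝ (A Un) Un : ℝ) - (inner ℝ (A Uprev) Uprev : ℝ)) / k
        + (1 + (inner ℝ (A Un) Un : ℝ)) * ‖A Un‖ ^ 2 ≤ ‖fn‖ ^ 2 := by
  set a : ℝ := inner ℝ (A Un) Un with ha
  set b : ℝ := inner ℝ (A Uprev) Uprev with hb
  -- inner product of the scheme with A Un
  have htest : (1 / k) * (inner ℝ (Un - Uprev) (A Un) : ℝ) + (1 + a) * ‖A Un‖ ^ 2
      = inner ℝ fn (A Un) := by
    have := congrArg (fun v => (inner ℝ v (A Un) : ℝ)) hscheme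
    simpa [inner_add_left, real_inner_smul_left, real_inner_self_eq_norm_sq] using this
  -- key monotonicity: ⟪Un - Uprev, A Un⟫ ≥ (a - b)/2
  have hkey : (a - b) / 2 ≤ (inner ℝ (Un - Uprev) (A Un) : ℝ) := by
    have hpd := hpos (Un - Uprev)
    have hexp : (inner ℝ (A (Un - Uprev)) (Un - Uprev) : ℝ)
        = a - 2 * (inner ℝ Uprev (A Un) : ℝ) + b := by
      have h3 : (inner ℝ (A Un) Uprev : ℝ) = inner ℝ Uprev (A Un) :=
        (hsymm Un Uprev).trans ((real_inner_comm Un (A Uprev)).symm.trans (hsymm Uprev Un))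
      have h4 : (inner ℝ (A Uprev) Un : ℝ) = inner ℝ Uprev (A Un) := hsymm Uprev Un
      simp only [map_sub, inner_sub_left, inner_sub_right]
      linarith [h3, h4]
    have hUe : (inner ℝ Un (A Un) : ℝ) = a := by
      rw [ha, real_inner_comm]
    have : (inner ℝ (Un - Uprev) (A Un) : ℝ) = a - inner ℝ Uprev (A Un) := by
      rw [inner_sub_left, hUe]
    rw [this]
    nlinarith [hpd, hexp]
  -- Cauchy-Schwarz / Young
  have hcs : (inner ℝ fn (A Un) : ℝ) ≤ ‖fn‖ * ‖A Un‖ := real_inner_le_norm fn (A Un)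
  have hyoung : ‖fn‖ * ‖A Un‖ ≤ (‖fn‖ ^ 2 + ‖A Un‖ ^ 2) / 2 := by
    nlinarith [sq_nonneg (‖fn‖ - ‖A Un‖)]
  have hapos : 0 ≤ a := hpos Un
  have hinv : 0 < 1 / k := by positivity
  have hsq : 0 ≤ a * ‖A Un‖ ^ 2 := by positivity
  have hstep : (1 / k) * ((a - b) / 2) + (1 + a) * ‖A Un‖ ^ 2
      ≤ (‖fn‖ ^ 2 + ‖A Un‖ ^ 2) / 2 := by
    have := mul_le_mul_of_nonneg_left hkey (le_of_lt hinv)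
    linarith [htest, hcs, hyoung, this]
  have hk' : (a - b) / k = 2 * ((1 / k) * ((a - b) / 2)) := by
    field_simp
  rw [hk']
  nlinarith [hstep, hsq]
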